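/- For all β > 0 and all n ∈ ℕ*, the polynomial identity z^n = ∑_{k odd, 1≤k≤n} C(n,k) β^{n−k}(z−β)^{k−1} z + ∑_{k odd, 1≤k≤n−1} C(n−1,k) β^{n−1−k}(z−β)^{k−1}(z² − 2βz) holds in ℝ[z] (with the convention (z−β)⁰ = 1). -/
import Mathlib

lemma odd_sum_key (β w : ℝ) (m : ℕ) :
    (∑ k ∈ (Finset.range (m+1)).filter (fun k => Odd k),
      (m.choose k : ℝ) * β ^ (m - k) * w ^ k) * 2
      = (w + β) ^ m - (-w + β) ^ m := by
  rw [add_pow, add_pow, ← Finset.sum_sub_distrib, Finset.sum_filter, Finset.sum_mul]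
  apply Finset.sum_congr rfl
  intro k _
  rcases Nat.even_or_odd k with he | ho
  · rw [if_neg (by simpa using he), he.neg_pow]
    ring
  · rw [if_pos ho, ho.neg_pow]
    ring

lemma filter_eq (m : ℕ) :
    (Finset.Icc 1 m).filter (fun k => Odd k)
      = (Finset.range (m+1)).filter (fun k => Odd k) := by
  ext k
  simp only [Finset.mem_filter, Finset.mem_Icc, Finset.mem_range, Nat.lt_succ_iff,
    Nat.odd_iff]
  omega

lemma odd_sum_key' (β w : ℝ) (m : ℕ) :
    (∑ k ∈ (Finset.Icc 1 m).filter (fun k => Odd k),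
      (m.choose k : ℝ) * β ^ (m - k) * w ^ (k - 1) * w) * 2
      = (w + β) ^ m - (-w + β) ^ m := by
  rw [← odd_sum_key β w m, filter_eq]
  congr 1
  apply Finset.sum_congr rfl
  intro k hk
  have hk1 : 1 ≤ k := by
    have h := Nat.odd_iff.mp (Finset.mem_filter.mp hk).2
    omega
  rw [mul_assoc, ← pow_succ, Nat.sub_add_cancel hk1]

lemma key2 (β w : ℝ) (m : ℕ) :
    (∑ k ∈ (Finset.Icc 1 m).filter (fun k => Odd k),
      (m.choose k : ℝ) * β ^ (m - k) * w ^ (k - 1)) * w * 2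
      = (w + β) ^ m - (-w + β) ^ m := by
  rw [← odd_sum_key' β w m, Finset.sum_mul]



/-- The polynomial identity
`z^n = ∑_{k odd, 1≤k≤n} C(n,k) β^{n−k} (z−β)^{k−1} z
     + ∑_{k odd, 1≤k≤n−1} C(n−1,k) β^{n−1−k} (z−β)^{k−1} (z² − 2βz)`
valid for all `β > 0` and `n ≥ 1` (as an identity of real polynomial functions). -/
theorem poly_identity_one (β : ℝ) (hβ : 0 < β) (n : ℕ) (hn : 1 ≤ n) (z : ℝ) :
    z ^ n =
      (∑ k ∈ (Finset.Icc 1 n).filter (fun k => Odd k),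
        (n.choose k : ℝ) * β ^ (n - k) * (z - β) ^ (k - 1) * z) +
      ∑ k ∈ (Finset.Icc 1 (n - 1)).filter (fun k => Odd k),
        ((n - 1).choose k : ℝ) * β ^ (n - 1 - k) * (z - β) ^ (k - 1) *
          (z ^ 2 - 2 * β * z) := by
  by_cases hw : z = β
  · rw [hw]
    have e1 : (∑ k ∈ (Finset.Icc 1 n).filter (fun k => Odd k),
        (n.choose k : ℝ) * β ^ (n - k) * (β - β) ^ (k - 1) * β) = (n : ℝ) * β ^ n := by
      rw [Finset.sum_eq_single_of_mem 1
        (by simp [Finset.mem_filter, Finset.mem_Icc, hn])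
        (fun k hk hne => by
          have hodd := (Finset.mem_filter.mp hk).2
          have h2 : 2 ≤ k := by
            have := Nat.odd_iff.mp hodd; omega
          rw [sub_self, zero_pow (by omega), mul_zero, zero_mul])]
      rw [sub_self]
      have hb1 : β ^ (n - 1) * β = β ^ n := by rw [← pow_succ, Nat.sub_add_cancel hn]
      norm_num [Nat.choose_one_right]
      linear_combination (n : ℝ) * hb1
    rw [e1]
    rcases eq_or_lt_of_le hn with h1 | h2
    · simp [← h1]
    · have e2 : (∑ k ∈ (Finset.Icc 1 (n - 1)).filter (fun k => Odd k),
          ((n - 1).choose k : ℝ) * β ^ (n - 1 - k) * (β - β) ^ (k - 1) *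
            (β ^ 2 - 2 * β * β)) =
          ((n : ℝ) - 1) * β ^ (n - 1 - 1) * (β ^ 2 - 2 * β * β) := by
        rw [Finset.sum_eq_single_of_mem 1
          (by simp [Finset.mem_filter, Finset.mem_Icc]; omega)
          (fun k hk hne => by
            have hodd := (Finset.mem_filter.mp hk).2
            have hk2 : 2 ≤ k := by
              have := Nat.odd_iff.mp hodd; omega
            rw [sub_self, zero_pow (by omega), mul_zero, zero_mul])]
        rw [sub_self]
        have : ((n - 1 : ℕ) : ℝ) = (n : ℝ) - 1 := by
          push_cast [Nat.cast_sub hn]; ring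
        rw [Nat.choose_one_right, this]
        norm_num
      rw [e2]
      have hb : β ^ (n - 1 - 1) * β ^ 2 = β ^ n := by
        rw [← pow_add]; congr 1; omega
      linear_combination ((n : ℝ) - 1) * hb
  · have hw' : z - β ≠ 0 := sub_ne_zero.mpr hw
    have h1 := key2 β (z - β) n
    have h2 := key2 β (z - β) (n - 1)
    rw [show z - β + β = z from by ring, show -(z - β) + β = 2 * β - z from by ring] at h1 h2
    have hz : z ^ n = z ^ (n - 1) * z := by
      rw [← pow_succ, Nat.sub_add_cancel hn]
    have hz' : (2 * β - z) ^ n = (2 * β - z) ^ (n - 1) * (2 * β - z) := by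
      rw [← pow_succ, Nat.sub_add_cancel hn]
    rw [hz, hz'] at h1
    rw [← Finset.sum_mul, ← Finset.sum_mul, hz]
    apply mul_right_cancel₀ (b := 2 * (z - β)) (by positivity)
    linear_combination (-z) * h1 + (2 * β * z - z ^ 2) * h2
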